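/- For every random variable X on (Ω,𝓕,P), ∫_{(0,1)} (F^←_X(u))^− dQ(u) = ∫_{(−∞,0)} D(F_X(x)) dλ(x), where λ is Lebesgue measure and (·)^− denotes the negative part (both sides taking values in [0,∞]). -/

import Mathlib

open MeasureTheory

/-- The distribution function `F_X(x) = P[X ≤ x]` of a random variable `X`. -/
noncomputable def distFun {Ω : Type*} [MeasurableSpace Ω] (P : Measure Ω) (X : Ω → ℝ) (x : ℝ) : ℝ :=
  (P {ω | X ω ≤ x}).toReal

/-- The (lower) quantile function `F^←_X(u) = inf {x | F_X(x) ≥ u}`. -/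
noncomputable def quantile {Ω : Type*} [MeasurableSpace Ω] (P : Measure Ω) (X : Ω → ℝ) (u : ℝ) : ℝ :=
  sInf {x : ℝ | u ≤ distFun P X x}

/-- A distortion function: an increasing, right-continuous `D : [0,1] → [0,1]`
with `D 0 = 0` and `sup_{u ∈ (0,1)} D u = 1`. -/
structure IsDistortion (D : ℝ → ℝ) : Prop where
  mapsTo : ∀ u ∈ Set.Icc (0:ℝ) 1, D u ∈ Set.Icc (0:ℝ) 1
  mono : ∀ ⦃a b : ℝ⦄, 0 ≤ a → a ≤ b → b ≤ 1 → D a ≤ D b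
  rightCont : ∀ u ∈ Set.Ico (0:ℝ) 1, ContinuousWithinAt D (Set.Icc u 1) u
  zero : D 0 = 0
  sup_one : sSup (D '' Set.Ioo 0 1) = 1

/-- `Q` is the probability measure on the Borel sets of `(0,1)` corresponding to
the distortion function `D`, i.e. `Q (a,b] = D b - D a` for `0 < a ≤ b < 1`. -/
def IsCorresponding (D : ℝ → ℝ) (Q : Measure ℝ) : Prop :=
  IsProbabilityMeasure Q ∧ Q (Set.Ioo (0:ℝ) 1) = 1 ∧
    ∀ a b : ℝ, 0 < a → a ≤ b → b < 1 → Q (Set.Ioc a b) = ENNReal.ofReal (D b - D a)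

section Aux

variable {Ω : Type*} [MeasurableSpace Ω] (P : Measure Ω) [IsProbabilityMeasure P] (X : Ω → ℝ)

lemma distFun_mono : Monotone (distFun P X) := fun x y hxy =>
  ENNReal.toReal_mono (measure_ne_top P _) (measure_mono fun ω h => le_trans h hxy)

lemma distFun_nonneg (x : ℝ) : 0 ≤ distFun P X x := ENNReal.toReal_nonneg

lemma distFun_le_one (x : ℝ) : distFun P X x ≤ 1 := by
  have := ENNReal.toReal_mono (ENNReal.one_ne_top) (prob_le_one (μ := P) (s := {ω | X ω ≤ x}))
  simpa [distFun] using this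

open Filter Topology in
lemma distFun_tendsto_right (hX : Measurable X) (x : ℝ) :
    Tendsto (fun n : ℕ => distFun P X (x + 1/(n+1))) atTop (𝓝 (distFun P X x)) := by
  have hset : {ω | X ω ≤ x} = ⋂ n : ℕ, {ω | X ω ≤ x + 1/(n+1)} := by
    ext ω
    simp only [Set.mem_iInter, Set.mem_setOf_eq]
    constructor
    · intro h n
      have : (0:ℝ) < 1/(n+1) := by positivity
      linarith
    · intro h
      refine le_of_forall_pos_le_add fun ε hε => ?_
      obtain ⟨n, hn⟩ := exists_nat_one_div_lt hε
      have := h n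
      linarith
  have hanti : Antitone fun n : ℕ => {ω | X ω ≤ x + 1/(n+1)} := by
    intro n m hnm ω hω
    simp only [Set.mem_setOf_eq] at *
    have hc : ((n:ℝ)) ≤ m := Nat.cast_le.mpr hnm
    have h1 : (1:ℝ)/(m+1) ≤ 1/(n+1) := one_div_le_one_div_of_le (by positivity) (by linarith)
    linarith
  have hmeas : ∀ n : ℕ, MeasureTheory.NullMeasurableSet {ω | X ω ≤ x + 1/(n+1)} P :=
    fun n => (hX measurableSet_Iic).nullMeasurableSet
  have h := tendsto_measure_iInter_atTop (μ := P) hmeas hanti ⟨0, measure_ne_top P _⟩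
  rw [← hset] at h
  exact (ENNReal.tendsto_toReal (measure_ne_top P _)).comp h

open Filter Topology in
lemma distFun_exists_ge {u : ℝ} (hu : u < 1) : ∃ y, u ≤ distFun P X y := by
  have hmono : Monotone fun n : ℕ => {ω | X ω ≤ (n:ℝ)} := by
    intro n m hnm ω hω
    simp only [Set.mem_setOf_eq] at *
    exact hω.trans (by exact_mod_cast hnm)
  have hun : ⋃ n : ℕ, {ω | X ω ≤ (n:ℝ)} = Set.univ := by
    ext ω; simp only [Set.mem_iUnion, Set.mem_setOf_eq, Set.mem_univ, iff_true]
    obtain ⟨n, hn⟩ := exists_nat_ge (X ω); exact ⟨n, hn⟩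
  have h := tendsto_measure_iUnion_atTop (μ := P) hmono
  rw [hun, measure_univ] at h
  have h2 := (ENNReal.tendsto_toReal ENNReal.one_ne_top).comp h
  simp only [ENNReal.toReal_one] at h2
  obtain ⟨n, hn⟩ := (h2.eventually (eventually_gt_nhds hu)).exists
  exact ⟨n, le_of_lt hn⟩

open Filter Topology in
lemma distFun_bddBelow (hX : Measurable X) {u : ℝ} (hu : 0 < u) :
    BddBelow {x | u ≤ distFun P X x} := by
  have hanti : Antitone fun n : ℕ => {ω | X ω ≤ -(n:ℝ)} := by
    intro n m hnm ω hω
    simp only [Set.mem_setOf_eq] at *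
    have : (n:ℝ) ≤ m := by exact_mod_cast hnm
    linarith
  have hint : ⋂ n : ℕ, {ω | X ω ≤ -(n:ℝ)} = ∅ := by
    ext ω
    simp only [Set.mem_iInter, Set.mem_setOf_eq, Set.mem_empty_iff_false, iff_false, not_forall]
    obtain ⟨n, hn⟩ := exists_nat_gt (-(X ω))
    exact ⟨n, by linarith⟩
  have hmeas : ∀ n : ℕ, MeasureTheory.NullMeasurableSet {ω | X ω ≤ -(n:ℝ)} P :=
    fun n => (hX measurableSet_Iic).nullMeasurableSet
  have h := tendsto_measure_iInter_atTop (μ := P) hmeas hanti ⟨0, measure_ne_top P _⟩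
  rw [hint] at h
  simp only [measure_empty] at h
  have h2 := (ENNReal.tendsto_toReal (by simp : (0:ENNReal) ≠ ⊤)).comp h
  simp only [ENNReal.toReal_zero] at h2
  obtain ⟨n, hn⟩ := (h2.eventually (eventually_lt_nhds hu)).exists
  refine ⟨-(n:ℝ), fun y hy => ?_⟩
  by_contra hlt
  push_neg at hlt
  have : distFun P X y ≤ distFun P X (-(n:ℝ)) := distFun_mono P X hlt.le
  have : u ≤ distFun P X (-(n:ℝ)) := le_trans hy this
  exact absurd this (not_le.mpr hn)

open Filter Topology in
lemma quantile_le_iff (hX : Measurable X) {u x : ℝ} (hu0 : 0 < u) (hu1 : u < 1) :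
    quantile P X u ≤ x ↔ u ≤ distFun P X x := by
  have hne : {y | u ≤ distFun P X y}.Nonempty := distFun_exists_ge P X hu1
  have hbdd : BddBelow {y | u ≤ distFun P X y} := distFun_bddBelow P X hX hu0
  constructor
  · intro h
    refine ge_of_tendsto' (distFun_tendsto_right P X hX x) fun n => ?_
    have hpos : (0:ℝ) < 1/(n+1) := by positivity
    have hlt : sInf {y | u ≤ distFun P X y} < x + 1/(n+1) := lt_of_le_of_lt h (by linarith)
    obtain ⟨y, hyS, hylt⟩ := exists_lt_of_csInf_lt hne hlt
    exact le_trans hyS (distFun_mono P X hylt.le)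
  · intro h
    exact csInf_le hbdd h

open Filter Topology in
lemma Q_Ioc_eq {D : ℝ → ℝ} {Q : Measure ℝ} (hD : IsDistortion D) (hQ : IsCorresponding D Q)
    {b : ℝ} (hb0 : 0 < b) (hb1 : b < 1) : Q (Set.Ioc 0 b) = ENNReal.ofReal (D b) := by
  have hmono : Monotone fun n : ℕ => Set.Ioc (b/(n+2)) b := by
    intro n m hnm
    apply Set.Ioc_subset_Ioc_left
    have hc : ((n:ℝ)) ≤ m := Nat.cast_le.mpr hnm
    exact div_le_div_of_nonneg_left hb0.le (by positivity) (by linarith)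
  have hun : ⋃ n : ℕ, Set.Ioc (b/(n+2)) b = Set.Ioc 0 b := by
    ext x
    simp only [Set.mem_iUnion, Set.mem_Ioc]
    constructor
    · rintro ⟨n, h1, h2⟩
      have : (0:ℝ) < b/(n+2) := by positivity
      exact ⟨by linarith, h2⟩
    · rintro ⟨hx0, hxb⟩
      obtain ⟨n, hn⟩ := exists_nat_gt (b/x)
      refine ⟨n, ?_, hxb⟩
      rw [div_lt_iff₀ (by positivity : (0:ℝ) < (n:ℝ)+2)]
      rw [div_lt_iff₀ hx0] at hn
      nlinarith [hx0]
  have htend1 : Tendsto (fun n : ℕ => Q (Set.Ioc (b/(n+2)) b)) atTop (𝓝 (Q (Set.Ioc 0 b))) := by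
    have := tendsto_measure_iUnion_atTop (μ := Q) hmono
    rw [hun] at this
    exact this
  have hQs : ∀ n : ℕ, Q (Set.Ioc (b/(n+2)) b) = ENNReal.ofReal (D b - D (b/(n+2))) := by
    intro n
    refine hQ.2.2 _ _ (by positivity) ?_ hb1
    exact div_le_self hb0.le (by push_cast; linarith [Nat.cast_nonneg (α := ℝ) n])
  have hseq : Tendsto (fun n : ℕ => b/((n:ℝ)+2)) atTop (𝓝[Set.Icc (0:ℝ) 1] 0) := by
    apply tendsto_nhdsWithin_of_tendsto_nhds_of_eventually_within
    · have h1 : Tendsto (fun n : ℕ => b/(n:ℝ)) atTop (𝓝 0) :=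
        tendsto_const_div_atTop_nhds_zero_nat b
      have h2 := h1.comp (tendsto_add_atTop_nat 2)
      have : (fun n : ℕ => b/((n:ℝ)+2)) = (fun n : ℕ => b/(n:ℝ)) ∘ (fun n => n + 2) := by
        funext n; simp [Function.comp]
      rw [this]
      exact h2
    · filter_upwards with n
      constructor
      · positivity
      · exact le_trans (div_le_self hb0.le (by push_cast; linarith [Nat.cast_nonneg (α := ℝ) n]))
          hb1.le
  have htendD : Tendsto (fun n : ℕ => D (b/((n:ℝ)+2))) atTop (𝓝 0) := by
    have hc := hD.rightCont 0 ⟨le_refl 0, one_pos⟩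
    have := hc.tendsto.comp hseq
    rwa [hD.zero] at this
  have htend2 : Tendsto (fun n : ℕ => ENNReal.ofReal (D b - D (b/((n:ℝ)+2)))) atTop
      (𝓝 (ENNReal.ofReal (D b))) := by
    have : Tendsto (fun n : ℕ => D b - D (b/((n:ℝ)+2))) atTop (𝓝 (D b - 0)) :=
      tendsto_const_nhds.sub htendD
    rw [sub_zero] at this
    exact (ENNReal.continuous_ofReal.tendsto _).comp this
  have htend1' : Tendsto (fun n : ℕ => ENNReal.ofReal (D b - D (b/((n:ℝ)+2)))) atTop
      (𝓝 (Q (Set.Ioc 0 b))) := by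
    have : (fun n : ℕ => ENNReal.ofReal (D b - D (b/((n:ℝ)+2))))
        = fun n : ℕ => Q (Set.Ioc (b/(n+2)) b) := by
      funext n; rw [hQs n]
    rw [this]
    exact htend1
  exact tendsto_nhds_unique htend1' htend2

lemma D_one_eq {D : ℝ → ℝ} (hD : IsDistortion D) : D 1 = 1 := by
  have hle : sSup (D '' Set.Ioo 0 1) ≤ D 1 := by
    apply csSup_le
    · exact ⟨D (1/2), ⟨1/2, ⟨by norm_num, by norm_num⟩, rfl⟩⟩
    · rintro y ⟨v, hv, rfl⟩
      exact hD.mono hv.1.le hv.2.le le_rfl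
  refine le_antisymm (hD.mapsTo 1 ⟨zero_le_one, le_refl 1⟩).2 (by linarith [hD.sup_one])

lemma Q_cut {D : ℝ → ℝ} {Q : Measure ℝ} (hD : IsDistortion D) (hQ : IsCorresponding D Q)
    {t : ℝ} (ht0 : 0 ≤ t) (ht1 : t ≤ 1) :
    Q (Set.Iic t ∩ Set.Ioo 0 1) = ENNReal.ofReal (D t) := by
  rcases eq_or_lt_of_le ht0 with h0 | h0
  · have hemp : Set.Iic t ∩ Set.Ioo (0:ℝ) 1 = ∅ := by
      ext x
      simp only [Set.mem_inter_iff, Set.mem_Iic, Set.mem_Ioo, Set.mem_empty_iff_false, iff_false,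
        not_and]
      intro hx h1 h2
      rw [← h0] at hx; linarith
    rw [hemp, measure_empty, ← h0, hD.zero, ENNReal.ofReal_zero]
  rcases eq_or_lt_of_le ht1 with h1 | h1
  · have hs : Set.Iic t ∩ Set.Ioo (0:ℝ) 1 = Set.Ioo 0 1 := by
      ext x
      simp only [Set.mem_inter_iff, Set.mem_Iic, Set.mem_Ioo]
      refine ⟨fun h => h.2, fun h => ⟨?_, h⟩⟩
      rw [h1]; linarith [h.2]
    rw [hs, hQ.2.1, h1, D_one_eq hD, ENNReal.ofReal_one]
  · have hs : Set.Iic t ∩ Set.Ioo (0:ℝ) 1 = Set.Ioc 0 t := by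
      ext x
      simp only [Set.mem_inter_iff, Set.mem_Iic, Set.mem_Ioo, Set.mem_Ioc]
      exact ⟨fun h => ⟨h.2.1, h.1⟩, fun h => ⟨h.2, h.1, lt_of_le_of_lt h.2 h1⟩⟩
    rw [hs]
    exact Q_Ioc_eq hD hQ h0 h1

end Aux

/-- `∫_{(0,1)} (F^←_X(u))⁻ dQ(u) = ∫_{(-∞,0)} D(F_X(x)) dλ(x)` in `[0,∞]`. -/
theorem lintegral_quantile_neg_part {Ω : Type*} [MeasurableSpace Ω]
    (P : Measure Ω) [IsProbabilityMeasure P] (D : ℝ → ℝ) (Q : Measure ℝ)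
    (hD : IsDistortion D) (hQ : IsCorresponding D Q)
    (X : Ω → ℝ) (hX : Measurable X) :
    ∫⁻ u in Set.Ioo (0:ℝ) 1, ENNReal.ofReal (max (-(quantile P X u)) 0) ∂Q
      = ∫⁻ x in Set.Iio (0:ℝ), ENNReal.ofReal (D (distFun P X x)) := by
  haveI := hQ.1
  have hFmono : Monotone (distFun P X) := distFun_mono P X
  have hFmeas : Measurable (distFun P X) := hFmono.measurable
  set g : ℝ → ℝ → ENNReal := fun u x => Set.indicator {x | u ≤ distFun P X x} (fun _ => 1) x
    with hg
  have hgmeas : Measurable (Function.uncurry g) := by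
    have heq : Function.uncurry g
        = Set.indicator {p : ℝ × ℝ | p.1 ≤ distFun P X p.2} (fun _ => 1) := by
      funext p
      rcases p with ⟨u, x⟩
      simp only [Function.uncurry, hg, Set.indicator_apply, Set.mem_setOf_eq]
    rw [heq]
    exact measurable_const.indicator (measurableSet_le measurable_fst (hFmeas.comp measurable_snd))
  have step1 : ∫⁻ u in Set.Ioo (0:ℝ) 1, ENNReal.ofReal (max (-(quantile P X u)) 0) ∂Q
      = ∫⁻ u in Set.Ioo (0:ℝ) 1, ∫⁻ x in Set.Iio (0:ℝ), g u x ∂volume ∂Q := by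
    refine setLIntegral_congr_fun measurableSet_Ioo ?_
    intro u hu
    have hset : {x | u ≤ distFun P X x} = Set.Ici (quantile P X u) := by
      ext x
      simp only [Set.mem_setOf_eq, Set.mem_Ici]
      exact (quantile_le_iff P X hX hu.1 hu.2).symm
    rw [hg]
    simp only
    rw [hset, lintegral_indicator measurableSet_Ici]
    rw [setLIntegral_one]
    rw [Measure.restrict_apply measurableSet_Ici, Set.Ici_inter_Iio, Real.volume_Ico]
    rcases le_total (-(quantile P X u)) 0 with h | h
    · rw [max_eq_right h]
      symm
      rw [ENNReal.ofReal_zero, ENNReal.ofReal_eq_zero]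
      linarith
    · rw [max_eq_left h]
      congr 1
      ring
  have step2 : ∫⁻ u in Set.Ioo (0:ℝ) 1, ∫⁻ x in Set.Iio (0:ℝ), g u x ∂volume ∂Q
      = ∫⁻ x in Set.Iio (0:ℝ), ∫⁻ u in Set.Ioo (0:ℝ) 1, g u x ∂Q ∂volume :=
    lintegral_lintegral_swap hgmeas.aemeasurable
  have step3 : ∫⁻ x in Set.Iio (0:ℝ), ∫⁻ u in Set.Ioo (0:ℝ) 1, g u x ∂Q ∂volume
      = ∫⁻ x in Set.Iio (0:ℝ), ENNReal.ofReal (D (distFun P X x)) := by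
    refine setLIntegral_congr_fun measurableSet_Iio ?_
    intro x _
    beta_reduce
    have heq : (fun u => g u x) = Set.indicator (Set.Iic (distFun P X x)) (fun _ => 1) := by
      funext u
      simp only [hg, Set.indicator_apply, Set.mem_setOf_eq, Set.mem_Iic]
    rw [heq, lintegral_indicator measurableSet_Iic, setLIntegral_one,
      Measure.restrict_apply measurableSet_Iic]
    exact Q_cut hD hQ (distFun_nonneg P X x) (distFun_le_one P X x)
  rw [step1, step2, step3]
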